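/- Eisenstein's formula for the Legendre symbol: for every odd prime p and every integer j, \(\left(\frac{j}{p}\right) = \prod_{n=1}^{(p-1)/2} \frac{\sin(2\pi n j/p)}{\sin(2\pi n/p)}\), where \(\left(\frac{j}{p}\right)\) denotes the Legendre symbol of j modulo p. -/

import Mathlib

open Finset

/-- Eisenstein's formula for the Legendre symbol: for every odd prime `p` and every
integer `j`, `(j/p) = ∏_{n=1}^{(p-1)/2} sin(2πnj/p) / sin(2πn/p)`. -/
theorem statement5 (p : ℕ) (hp : Fact p.Prime) (hp2 : p ≠ 2) (j : ℤ) :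
    (legendreSym p j : ℝ) =
      ∏ n ∈ Finset.Icc 1 ((p - 1) / 2),
        Real.sin (2 * Real.pi * n * j / p) / Real.sin (2 * Real.pi * n / p) := by
  have hodd : p % 2 = 1 := hp.out.eq_two_or_odd.resolve_left hp2
  have hp3 : 3 ≤ p := by
    have := hp.out.two_le; omega
  have hpR : (0:ℝ) < p := by exact_mod_cast (by omega : 0 < p)
  have hhalf : (p - 1) / 2 = p / 2 := by omega
  rw [hhalf, ← Finset.Ico_add_one_right_eq_Icc, ← Nat.succ_eq_add_one]
  by_cases hj : (j : ZMod p) = 0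
  · have hL : legendreSym p j = 0 := (legendreSym.eq_zero_iff p j).mpr hj
    obtain ⟨m, rfl⟩ := (ZMod.intCast_zmod_eq_zero_iff_dvd j p).mp hj
    rw [hL]
    symm
    push_cast
    apply Finset.prod_eq_zero (i := 1) (by rw [Finset.mem_Ico]; omega)
    have harg : 2 * Real.pi * ((1:ℕ):ℝ) * ((p:ℝ) * m) / p = 0 + m * (2 * Real.pi) := by
      field_simp
      ring
    rw [harg, Real.sin_add_int_mul_two_pi, Real.sin_zero, zero_div]
  · -- main case
    set s := Ico 1 (p / 2).succ with hs
    have hmem : ∀ x ∈ s, 1 ≤ x ∧ x ≤ p / 2 := by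
      intro x hx
      simp only [hs, mem_Ico, Nat.lt_succ_iff] at hx
      exact hx
    -- positivity of denominators
    have hBpos : ∀ x ∈ s, 0 < Real.sin (2 * Real.pi * x / p) := by
      intro x hx
      obtain ⟨h1, h2⟩ := hmem x hx
      apply Real.sin_pos_of_pos_of_lt_pi
      · have : (0:ℝ) < (x:ℝ) := by exact_mod_cast h1
        positivity
      · rw [div_lt_iff₀ hpR]
        have h2x : 2 * x < p := by omega
        have : (2 * x : ℝ) < p := by exact_mod_cast h2x
        nlinarith [Real.pi_pos]
    -- key pointwise identity
    have key : ∀ x ∈ s, Real.sin (2 * Real.pi * x * j / p) =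
        (if p / 2 < ((j : ZMod p) * x).val then (-1:ℝ) else 1) *
          Real.sin (2 * Real.pi * (((j : ZMod p) * x).valMinAbs.natAbs : ℕ) / p) := by
      intro x hx
      set v : ℤ := ((j : ZMod p) * x).valMinAbs with hvdef
      have hv : ((v : ℤ) : ZMod p) = (j : ZMod p) * x := ZMod.coe_valMinAbs _
      have hzero : ((j * x - v : ℤ) : ZMod p) = 0 := by push_cast [hv]; ring
      obtain ⟨k, hk⟩ := (ZMod.intCast_zmod_eq_zero_iff_dvd _ p).mp hzero
      have hR : (j:ℝ) * x = v + p * k := by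
        have : (j * x : ℤ) = v + p * k := by linarith
        exact_mod_cast this
      have harg : 2 * Real.pi * x * j / p = 2 * Real.pi * v / p + k * (2 * Real.pi) := by
        field_simp
        linear_combination hR
      rw [harg, Real.sin_add_int_mul_two_pi]
      rcases le_or_gt 0 v with h | h
      · have hval : ((j : ZMod p) * x).val ≤ p / 2 := (ZMod.valMinAbs_nonneg_iff _).mp h
        rw [if_neg (not_lt.mpr hval), one_mul]
        have : ((v.natAbs : ℕ) : ℝ) = (v : ℝ) := by
          rw [Nat.cast_natAbs]
          exact_mod_cast abs_of_nonneg h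
        rw [this]
      · have hval : p / 2 < ((j : ZMod p) * x).val := by
          by_contra h'
          push_neg at h'
          exact absurd ((ZMod.valMinAbs_nonneg_iff _).mpr h') (not_le.mpr h)
        rw [if_pos hval]
        have hna : ((v.natAbs : ℕ) : ℝ) = -(v : ℝ) := by
          rw [Nat.cast_natAbs]
          exact_mod_cast abs_of_nonpos h.le
        rw [hna, show 2 * Real.pi * (-(v:ℝ)) / p = -(2 * Real.pi * v / p) by ring,
          Real.sin_neg]
        ring
    -- product of numerators
    have hprodA : ∏ x ∈ s, Real.sin (2 * Real.pi * x * j / p) =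
        ((-1:ℝ) ^ (s.filter fun x : ℕ => p / 2 < ((j : ZMod p) * (x : ℕ)).val).card) *
          ∏ x ∈ s, Real.sin (2 * Real.pi * x / p) := by
      rw [Finset.prod_congr rfl key, Finset.prod_mul_distrib]
      congr 1
      · rw [Finset.prod_ite, Finset.prod_const, Finset.prod_const, one_pow, mul_one]
      · -- multiset reindexing
        have hmap := ZMod.Ico_map_valMinAbs_natAbs_eq_Ico_map_id p (j : ZMod p) hj
        calc ∏ x ∈ s, Real.sin (2 * Real.pi * (((j : ZMod p) * x).valMinAbs.natAbs : ℕ) / p)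
            = ((s.1.map fun x : ℕ => ((j : ZMod p) * x).valMinAbs.natAbs).map
                fun y : ℕ => Real.sin (2 * Real.pi * y / p)).prod := by
              rw [Multiset.map_map, Finset.prod_eq_multiset_prod]
              rfl
          _ = ((s.1.map fun a : ℕ => a).map
                fun y : ℕ => Real.sin (2 * Real.pi * y / p)).prod := by rw [hmap]
          _ = ∏ x ∈ s, Real.sin (2 * Real.pi * x / p) := by
              rw [Multiset.map_map, Finset.prod_eq_multiset_prod]
              rfl
    have hgauss := ZMod.gauss_lemma hp2 hj
    have hBne : (∏ x ∈ s, Real.sin (2 * Real.pi * x / p)) ≠ 0 :=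
      (Finset.prod_pos hBpos).ne'
    rw [Finset.prod_div_distrib, hprodA, mul_div_assoc, div_self hBne, mul_one, hgauss]
    push_cast
    ring
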